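/- arXiv:1407.5138 — 2 statements merged into one kernel-verified Lean document; each statement's English description precedes it below -/
import Mathlib

section
/- In the minimal counterexample (G, C_0), no 3-face and 4-face of G share a common edge. -/
/-!
Common definitions for formalizing "A relaxation of the Bordeaux Conjecture"
(Liu, Li, Yu).  We model a plane graph combinatorially: a simple graph together
with a set of faces (each given by its boundary cycle, a list of vertices in
cyclic order), a distinguished outer face, and, for each cycle, the sets of
vertices drawn strictly inside and strictly outside of it.

A (2,0,0)-coloring uses colors `0, 1, 2 : Fin 3`, where color `0` is the color
of deficiency 2 (called "color 1" in the paper) and colors `1` and `2` must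
induce independent sets.
-/

variable {V : Type} [Fintype V] [DecidableEq V]

/-- `l` is the list of vertices of a cycle of `G`, in cyclic order. -/
def IsCycleList (G : SimpleGraph V) (l : List V) : Prop :=
  3 ≤ l.length ∧ l.Nodup ∧ ∀ p ∈ l.zip (l.rotate 1), G.Adj p.1 p.2

/-- Two lists represent the same cyclic sequence, up to rotation and reflection. -/
def SameCycle (l l' : List V) : Prop :=
  ∃ n : ℕ, l'.rotate n = l ∨ l'.reverse.rotate n = l

/-- `u` and `v` are consecutive vertices (i.e. joined by an edge) of the cycle `l`. -/
def CycAdj (l : List V) (u v : V) : Prop :=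
  (u, v) ∈ l.zip (l.rotate 1) ∨ (v, u) ∈ l.zip (l.rotate 1)

/-- A combinatorial model of a plane graph. -/
structure PlaneGraph (V : Type) [Fintype V] [DecidableEq V] where
  /-- the underlying abstract simple graph -/
  G : SimpleGraph V
  /-- the faces, given by their boundary cycles -/
  faces : Set (List V)
  /-- the boundary cycle of the outer (unbounded) face -/
  outer : List V
  outer_mem : outer ∈ faces
  faces_cycle : ∀ l ∈ faces, IsCycleList G l
  /-- the set of vertices strictly inside a cycle -/
  inside : List V → Set V
  /-- the set of vertices strictly outside a cycle -/
  outside : List V → Set V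
  inside_outside_cover : ∀ l, IsCycleList G l → ∀ v : V,
    v ∈ inside l ∨ v ∈ outside l ∨ v ∈ l
  inside_outside_disjoint : ∀ l, Disjoint (inside l) (outside l)
  on_cycle_not_inside_outside : ∀ l, ∀ v ∈ l, v ∉ inside l ∧ v ∉ outside l
  no_edge_inside_outside : ∀ l, IsCycleList G l →
    ∀ u ∈ inside l, ∀ v ∈ outside l, ¬ G.Adj u v
  inner_face_inside_empty : ∀ l ∈ faces, ¬ SameCycle l outer → inside l = ∅
  outer_outside_empty : outside outer = ∅

namespace PlaneGraph

/-- `l` is the boundary cycle of a face of `P` (up to rotation/reflection). -/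
def IsFace (P : PlaneGraph V) (l : List V) : Prop :=
  ∃ l' ∈ P.faces, SameCycle l l'

/-- The degree of a vertex. -/
noncomputable def deg (P : PlaneGraph V) (v : V) : ℕ :=
  {u | P.G.Adj v u}.ncard

/-- A separating cycle: there are vertices strictly inside and strictly outside. -/
def Separating (P : PlaneGraph V) (l : List V) : Prop :=
  IsCycleList P.G l ∧ (P.inside l).Nonempty ∧ (P.outside l).Nonempty

end PlaneGraph

/-- `a`, `b`, `c` span a triangle of `G`. -/
def IsTriangle (G : SimpleGraph V) (a b c : V) : Prop :=
  G.Adj a b ∧ G.Adj b c ∧ G.Adj c a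

/-- `v` is incident to (i.e. lies on) some triangle of `G`. -/
def OnTriangle (G : SimpleGraph V) (v : V) : Prop :=
  ∃ a b : V, IsTriangle G v a b

/-- `G` contains no cycle of length 5. -/
def NoFiveCycle (G : SimpleGraph V) : Prop :=
  ∀ l : List V, IsCycleList G l → l.length ≠ 5

/-- No two distinct triangles of `G` share a vertex. -/
def NoIntersectingTriangles (G : SimpleGraph V) : Prop :=
  ∀ a b c d e f : V, IsTriangle G a b c → IsTriangle G d e f →
    (({a, b, c} : Set V) ∩ ({d, e, f} : Set V)).Nonempty →
    ({a, b, c} : Set V) = ({d, e, f} : Set V)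

/-- Membership in the family `𝒢` of plane graphs with no 5-cycles and no
two triangles sharing a vertex. -/
def PlaneGraph.InFamilyG (P : PlaneGraph V) : Prop :=
  NoFiveCycle P.G ∧ NoIntersectingTriangles P.G

/-- A (2,0,0)-coloring of `G`: color `0` induces a subgraph of maximum degree
at most `2`, and colors `1` and `2` induce independent sets. -/
def IsCol200 (G : SimpleGraph V) (c : V → Fin 3) : Prop :=
  (∀ u v : V, G.Adj u v → c u ≠ 0 → c u ≠ c v) ∧
  (∀ v : V, c v = 0 → {u | G.Adj v u ∧ c u = 0}.ncard ≤ 2)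

/-- A (2,0,0)-coloring of the cycle `l`, viewed as a subgraph. -/
def IsCol200Cycle (l : List V) (c : V → Fin 3) : Prop :=
  (∀ u v : V, CycAdj l u v → c u ≠ 0 → c u ≠ c v) ∧
  (∀ v ∈ l, c v = 0 → {u | CycAdj l u v ∧ c u = 0}.ncard ≤ 2)

/-- `c` agrees with `c₀` on the cycle `l` and every vertex off `l` receives a
color different from those of all of its neighbors on `l`. -/
def SuperextendsOn (G : SimpleGraph V) (l : List V) (c₀ c : V → Fin 3) : Prop :=
  (∀ v ∈ l, c v = c₀ v) ∧ ∀ v : V, v ∉ l → ∀ u ∈ l, G.Adj v u → c v ≠ c u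

/-- `(G, l)` is superextendable: every (2,0,0)-coloring of the cycle `l` extends to
a (2,0,0)-coloring of `G` in which every vertex off `l` gets a color different from
those of all of its neighbors on `l`. -/
def Superextendable (G : SimpleGraph V) (l : List V) : Prop :=
  ∀ c₀ : V → Fin 3, IsCol200Cycle l c₀ →
    ∃ c : V → Fin 3, IsCol200 G c ∧ SuperextendsOn G l c₀ c

/-- `σ(G) = |V(G)| + |E(G)|`. -/
noncomputable def PlaneGraph.sigma (P : PlaneGraph V) : ℕ :=
  Fintype.card V + P.G.edgeSet.ncard

/-- `(P, C₀)` is a counterexample to the main theorem that minimizes `σ`: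
`P` is a plane graph in `𝒢`, `C₀` is a triangle or a 7-cycle of `P`,
`(P, C₀)` is not superextendable, and every pair `(P', C')` of this kind with
smaller `σ` is superextendable. -/
def IsMinCex (P : PlaneGraph V) (C₀ : List V) : Prop :=
  P.InFamilyG ∧ IsCycleList P.G C₀ ∧ (C₀.length = 3 ∨ C₀.length = 7) ∧
  ¬ Superextendable P.G C₀ ∧
  ∀ (n : ℕ) (P' : PlaneGraph (Fin n)) (C' : List (Fin n)),
    P'.InFamilyG → IsCycleList P'.G C' → (C'.length = 3 ∨ C'.length = 7) →
    P'.sigma < P.sigma → Superextendable P'.G C'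

/-- The graph obtained from `G` by identifying the vertices `u` and `w` (the merged
vertex is `u`; the vertex `w` becomes isolated). -/
def identify (G : SimpleGraph V) (u w : V) : SimpleGraph V where
  Adj x y := x ≠ y ∧ x ≠ w ∧ y ≠ w ∧
    (G.Adj x y ∨ (x = u ∧ G.Adj w y) ∨ (y = u ∧ G.Adj x w))
  symm := ⟨by
    rintro x y ⟨hxy, hxw, hyw, h⟩
    refine ⟨hxy.symm, hyw, hxw, ?_⟩
    rcases h with h | ⟨hx, h⟩ | ⟨hy, h⟩
    · exact Or.inl h.symm
    · exact Or.inr (Or.inr ⟨hx, h.symm⟩)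
    · exact Or.inr (Or.inl ⟨hy, h.symm⟩)⟩
  loopless := ⟨by
    rintro x ⟨hxx, -⟩
    exact hxx rfl⟩

/-- The graph obtained from `G` by deleting the vertices of `S`
(the deleted vertices become isolated). -/
def delVerts (G : SimpleGraph V) (S : Set V) : SimpleGraph V where
  Adj x y := G.Adj x y ∧ x ∉ S ∧ y ∉ S
  symm := ⟨fun _ _ h => ⟨h.1.symm, h.2.2, h.2.1⟩⟩
  loopless := ⟨fun x h => G.loopless.irrefl x h.1⟩

/-- Base special 3-faces: `(3,3,5⁻)`-faces and `(3,4,4)`-faces disjoint from `C₀`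
(the first listed vertex is a 3-vertex). -/
def IsBaseSpecial (P : PlaneGraph V) (C₀ : List V) (u v w : V) : Prop :=
  P.IsFace [u, v, w] ∧ u ∉ C₀ ∧ v ∉ C₀ ∧ w ∉ C₀ ∧ P.deg u = 3 ∧
    ((P.deg v = 3 ∧ P.deg w ≤ 5) ∨ (P.deg v = 4 ∧ P.deg w = 4))

/-- Special 3-faces of rank at most `n`, following the paper's recursive
definition: the base special faces are the `(3,3,5⁻)`- and `(3,4,4)`-faces
disjoint from `C₀`; a `(3,5,5)`-face `uvw` (disjoint from `C₀`, with `d(u)=3`)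
is special of rank `n+1` when each off-face neighbor of each of its two
5-vertices is a 3-vertex lying on a pendant special 3-face of rank at most `n`,
i.e. the two 5-vertices have six pendant special 3-faces altogether. -/
def SpecialRank (P : PlaneGraph V) (C₀ : List V) : ℕ → V → V → V → Prop
  | 0 => fun u v w => IsBaseSpecial P C₀ u v w
  | n + 1 => fun u v w =>
      SpecialRank P C₀ n u v w ∨
      (P.IsFace [u, v, w] ∧ u ∉ C₀ ∧ v ∉ C₀ ∧ w ∉ C₀ ∧
        P.deg u = 3 ∧ P.deg v = 5 ∧ P.deg w = 5 ∧
        (∀ x : V, P.G.Adj v x → x ≠ u → x ≠ w →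
          ∃ a b c : V, SpecialRank P C₀ n a b c ∧ v ≠ a ∧ v ≠ b ∧ v ≠ c ∧
            (x = a ∨ x = b ∨ x = c) ∧ P.deg x = 3) ∧
        (∀ x : V, P.G.Adj w x → x ≠ u → x ≠ v →
          ∃ a b c : V, SpecialRank P C₀ n a b c ∧ w ≠ a ∧ w ≠ b ∧ w ≠ c ∧
            (x = a ∨ x = b ∨ x = c) ∧ P.deg x = 3))

/-- `uvw` is a special 3-face (of some rank). -/
def IsSpecial (P : PlaneGraph V) (C₀ : List V) (u v w : V) : Prop :=
  ∃ n : ℕ, SpecialRank P C₀ n u v w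

/-- The set `S` is the vertex set of a special 3-face. -/
def IsSpecialOn (P : PlaneGraph V) (C₀ : List V) (S : Set V) : Prop :=
  ∃ a b c : V, IsSpecial P C₀ a b c ∧ S = {a, b, c}

/-- `S` is the vertex set of a pendant special 3-face of `y`:  a special 3-face
not containing `y` one of whose 3-vertices is adjacent to `y`. -/
def PendantSpecial (P : PlaneGraph V) (C₀ : List V) (y : V) (S : Set V) : Prop :=
  IsSpecialOn P C₀ S ∧ y ∉ S ∧ ∃ x ∈ S, P.deg x = 3 ∧ P.G.Adj y x

/-- The number of pendant special 3-faces of `y`. -/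
noncomputable def pendCount (P : PlaneGraph V) (C₀ : List V) (y : V) : ℕ :=
  {S : Set V | PendantSpecial P C₀ y S}.ncard


lemma mem_zip_rot {l : List V} (hl : 0 < l.length) {p : V × V} :
    p ∈ l.zip (l.rotate 1) ↔
      ∃ i, p = (l[i % l.length]'(Nat.mod_lt _ hl), l[(i+1) % l.length]'(Nat.mod_lt _ hl)) := by
  constructor
  · intro hp
    rw [List.mem_iff_getElem] at hp
    obtain ⟨i, hi, he⟩ := hp
    have hi' : i < l.length := by simpa using hi
    refine ⟨i, ?_⟩
    rw [← he]
    simp [List.getElem_zip, List.getElem_rotate, Nat.mod_eq_of_lt hi']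
  · rintro ⟨i, rfl⟩
    rw [List.mem_iff_getElem]
    refine ⟨i % l.length, by simpa using Nat.mod_lt _ hl, ?_⟩
    rw [List.getElem_zip]
    congr 1
    rw [List.getElem_rotate]
    congr 1
    conv_rhs => rw [← Nat.mod_add_mod]

lemma isCycleList_rotate {G : SimpleGraph V} {l : List V} (h : IsCycleList G l) (n : ℕ) :
    IsCycleList G (l.rotate n) := by
  obtain ⟨h1, h2, h3⟩ := h
  have hl : 0 < l.length := by omega
  have hl' : 0 < (l.rotate n).length := by simpa using hl
  refine ⟨by simpa using h1, by simpa using h2, ?_⟩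
  intro p hp
  rw [mem_zip_rot hl'] at hp
  obtain ⟨i, rfl⟩ := hp
  have c1 : (l.rotate n)[i % (l.rotate n).length]'(Nat.mod_lt _ hl')
      = l[(i + n) % l.length]'(Nat.mod_lt _ hl) := by
    rw [List.getElem_rotate]
    congr 1
    rw [List.length_rotate, Nat.mod_add_mod]
  have c2 : (l.rotate n)[(i+1) % (l.rotate n).length]'(Nat.mod_lt _ hl')
      = l[(i + n + 1) % l.length]'(Nat.mod_lt _ hl) := by
    rw [List.getElem_rotate]
    congr 1
    rw [List.length_rotate, Nat.mod_add_mod]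
    congr 1
    omega
  have := h3 (l[(i + n) % l.length]'(Nat.mod_lt _ hl), l[(i + n + 1) % l.length]'(Nat.mod_lt _ hl))
    ((mem_zip_rot hl).2 ⟨i + n, rfl⟩)
  rw [c1, c2]
  exact this

lemma isCycleList_reverse {G : SimpleGraph V} {l : List V} (h : IsCycleList G l) :
    IsCycleList G l.reverse := by
  obtain ⟨h1, h2, h3⟩ := h
  have hl : 0 < l.length := by omega
  have hl' : 0 < l.reverse.length := by simpa using hl
  refine ⟨by simpa using h1, by simpa using h2, ?_⟩
  intro p hp
  rw [mem_zip_rot hl'] at hp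
  obtain ⟨i, rfl⟩ := hp
  set L := l.length with hL
  have hi1 : i % l.reverse.length < L := by simpa using Nat.mod_lt _ hl'
  have hi2 : (i+1) % l.reverse.length < L := by simpa using Nat.mod_lt _ hl'
  have e1 : l.reverse[i % l.reverse.length]'(Nat.mod_lt _ hl') = l[L - 1 - i % l.reverse.length]'(by omega) := by
    rw [List.getElem_reverse]
  have e2 : l.reverse[(i+1) % l.reverse.length]'(Nat.mod_lt _ hl') = l[L - 1 - (i+1) % l.reverse.length]'(by omega) := by
    rw [List.getElem_reverse]
  set a := i % l.reverse.length
  set b := (i+1) % l.reverse.length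
  have hab : b = (a + 1) % L := by
    simp only [a, b, List.length_reverse, ← hL]
    rw [Nat.mod_add_mod]
  have hj : (L - 1 - b + 1) % L = L - 1 - a := by
    rcases Nat.lt_or_ge (a+1) L with hc | hc
    · have hb : b = a + 1 := by rw [hab]; exact Nat.mod_eq_of_lt hc
      rw [Nat.mod_eq_of_lt (by omega)]
      omega
    · have ha : a + 1 = L := by omega
      have hb : b = 0 := by rw [hab, ha, Nat.mod_self]
      have h2' : L - 1 - b + 1 = L := by omega
      rw [h2', Nat.mod_self]
      omega
  have edge := h3 (l[L - 1 - b]'(by omega), l[L - 1 - a]'(by omega))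
    ((mem_zip_rot hl).2 ⟨L - 1 - b, by
      congr 1
      · congr 1; exact (Nat.mod_eq_of_lt (by omega)).symm
      · congr 1; rw [hj]⟩)
  rw [e1, e2]
  exact (edge).symm


lemma triangle_extract {G : SimpleGraph V} {l : List V} (h : IsCycleList G l)
    (hlen : l.length = 3) {u v : V} (ha : CycAdj l u v) :
    ∃ w, G.Adj u v ∧ G.Adj v w ∧ G.Adj w u ∧ u ≠ v ∧ v ≠ w ∧ w ≠ u := by
  obtain ⟨-, hnd, hadj⟩ := h
  match l, hlen with
  | [a, b, c], _ =>
    have hrot : [a,b,c].rotate 1 = [b,c,a] := by simp [List.rotate]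
    unfold CycAdj at ha
    rw [hrot] at hadj ha
    simp only [List.zip_cons_cons, List.zip_nil_right] at hadj ha
    have hab : G.Adj a b := hadj (a,b) (by simp)
    have hbc : G.Adj b c := hadj (b,c) (by simp)
    have hca : G.Adj c a := hadj (c,a) (by simp)
    simp only [List.nodup_cons, List.mem_cons] at hnd
    have nab : a ≠ b := by tauto
    have nbc : b ≠ c := by tauto
    have nac : a ≠ c := by tauto
    rcases ha with h | h <;> simp only [List.mem_cons, List.mem_singleton, Prod.mk.injEq,
      List.not_mem_nil, or_false] at h <;>
      rcases h with ⟨rfl, rfl⟩ | ⟨rfl, rfl⟩ | ⟨rfl, rfl⟩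
    · exact ⟨c, hab, hbc, hca, nab, nbc, fun e => nac e.symm⟩
    · exact ⟨a, hbc, hca, hab, nbc, fun e => nac e.symm, nab⟩
    · exact ⟨b, hca, hab, hbc, fun e => nac e.symm, nab, nbc⟩
    · exact ⟨c, hab.symm, hca.symm, hbc.symm, fun e => nab e.symm, nac, fun e => nbc e.symm⟩
    · exact ⟨a, hbc.symm, hab.symm, hca.symm, fun e => nbc e.symm, fun e => nab e.symm, nac⟩
    · exact ⟨b, hca.symm, hbc.symm, hab.symm, nac, fun e => nbc e.symm, fun e => nab e.symm⟩

lemma quad_extract {G : SimpleGraph V} {l : List V} (h : IsCycleList G l)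
    (hlen : l.length = 4) {u v : V} (ha : CycAdj l u v) :
    ∃ x y, G.Adj v x ∧ G.Adj x y ∧ G.Adj y u ∧
      u ≠ v ∧ u ≠ x ∧ u ≠ y ∧ v ≠ x ∧ v ≠ y ∧ x ≠ y := by
  obtain ⟨-, hnd, hadj⟩ := h
  match l, hlen with
  | [a, b, c, d], _ =>
    have hrot : [a,b,c,d].rotate 1 = [b,c,d,a] := by simp [List.rotate]
    unfold CycAdj at ha
    rw [hrot] at hadj ha
    simp only [List.zip_cons_cons, List.zip_nil_right] at hadj ha
    have hab : G.Adj a b := hadj (a,b) (by simp)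
    have hbc : G.Adj b c := hadj (b,c) (by simp)
    have hcd : G.Adj c d := hadj (c,d) (by simp)
    have hda : G.Adj d a := hadj (d,a) (by simp)
    simp only [List.nodup_cons, List.mem_cons] at hnd
    have nab : a ≠ b := by tauto
    have nac : a ≠ c := by tauto
    have nad : a ≠ d := by tauto
    have nbc : b ≠ c := by tauto
    have nbd : b ≠ d := by tauto
    have ncd : c ≠ d := by tauto
    rcases ha with h | h <;> simp only [List.mem_cons, List.mem_singleton, Prod.mk.injEq,
      List.not_mem_nil, or_false] at h <;>
      rcases h with ⟨rfl, rfl⟩ | ⟨rfl, rfl⟩ | ⟨rfl, rfl⟩ | ⟨rfl, rfl⟩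
    · exact ⟨c, d, hbc, hcd, hda, nab, nac, nad, nbc, nbd, ncd⟩
    · exact ⟨d, a, hcd, hda, hab, nbc, nbd, fun e => nab e.symm, ncd, fun e => nac e.symm, fun e => nad e.symm⟩
    · exact ⟨a, b, hda, hab, hbc, ncd, fun e => nac e.symm, fun e => nbc e.symm, fun e => nad e.symm, fun e => nbd e.symm, nab⟩
    · exact ⟨b, c, hab, hbc, hcd, fun e => nad e.symm, fun e => nbd e.symm, fun e => ncd e.symm, nab, nac, nbc⟩
    · exact ⟨d, c, hda.symm, hcd.symm, hbc.symm, fun e => nab e.symm, nbd, nbc, nad, nac, fun e => ncd e.symm⟩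
    · exact ⟨a, d, hab.symm, hda.symm, hcd.symm, fun e => nbc e.symm, fun e => nac e.symm, ncd, fun e => nab e.symm, nbd, nad⟩
    · exact ⟨b, a, hbc.symm, hab.symm, hda.symm, fun e => ncd e.symm, fun e => nbd e.symm, fun e => nad e.symm, fun e => nbc e.symm, fun e => nac e.symm, fun e => nab e.symm⟩
    · exact ⟨c, b, hcd.symm, hbc.symm, hab.symm, nad, nac, nab, fun e => ncd e.symm, fun e => nbd e.symm, fun e => nbc e.symm⟩


/-- In the minimal counterexample `(G, C₀)`, no 3-face and 4-face of
`G` share a common edge. -/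
theorem mincex_no_three_face_meets_four_face
    (P : PlaneGraph V) (C₀ : List V) (h : IsMinCex P C₀) :
    ∀ l₃ l₄ : List V, P.IsFace l₃ → l₃.length = 3 → P.IsFace l₄ → l₄.length = 4 →
      ∀ u v : V, CycAdj l₃ u v → ¬ CycAdj l₄ u v := by
  intro l₃ l₄ hf3 hlen3 hf4 hlen4 u v h3 h4
  obtain ⟨⟨h5, hT⟩, -⟩ := h
  have transfer : ∀ l : List V, P.IsFace l → IsCycleList P.G l := by
    rintro l ⟨l', hl', n, hn | hn⟩
    · rw [← hn]; exact isCycleList_rotate (P.faces_cycle l' hl') n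
    · rw [← hn]; exact isCycleList_rotate (isCycleList_reverse (P.faces_cycle l' hl')) n
  have hc3 := transfer l₃ hf3
  have hc4 := transfer l₄ hf4
  obtain ⟨w, hT1, hT2, hT3, huv, hvw, hwu⟩ := triangle_extract hc3 hlen3 h3
  obtain ⟨x, y, hvx, hxy, hyu, quv, qux, quy, qvx, qvy, qxy⟩ := quad_extract hc4 hlen4 h4
  have hwx : w ≠ x := by
    intro e; subst e
    have t1 : IsTriangle P.G u v w := ⟨hT1, hT2, hT3⟩
    have t2 : IsTriangle P.G u y w := ⟨hyu.symm, hxy.symm, hT3⟩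
    have heq := hT u v w u y w t1 t2 ⟨u, by simp⟩
    have hv : v ∈ ({u, y, w} : Set V) := by rw [← heq]; simp
    simp only [Set.mem_insert_iff, Set.mem_singleton_iff] at hv
    rcases hv with rfl | rfl | rfl
    · exact huv rfl
    · exact qvy rfl
    · exact hvw rfl
  have hwy : w ≠ y := by
    intro e; subst e
    have t1 : IsTriangle P.G u v w := ⟨hT1, hT2, hT3⟩
    have t2 : IsTriangle P.G v x w := ⟨hvx, hxy, hT2.symm⟩
    have heq := hT u v w v x w t1 t2 ⟨v, by simp⟩
    have hx : x ∈ ({u, v, w} : Set V) := by rw [heq]; simp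
    simp only [Set.mem_insert_iff, Set.mem_singleton_iff] at hx
    rcases hx with rfl | rfl | rfl
    · exact qux rfl
    · exact qvx rfl
    · exact qxy rfl
  have hcyc5 : IsCycleList P.G [w, u, y, x, v] := by
    refine ⟨by simp, ?_, ?_⟩
    · simp only [List.nodup_cons, List.mem_cons, List.not_mem_nil, List.mem_singleton,
        or_false, List.nodup_nil, and_true, not_or]
      exact ⟨⟨hwu, hwy, hwx, Ne.symm hvw⟩, ⟨quy, qux, huv⟩, ⟨Ne.symm qxy, Ne.symm qvy⟩,
        ⟨Ne.symm qvx, not_false⟩⟩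
    · have hrot : [w, u, y, x, v].rotate 1 = [u, y, x, v, w] := by simp [List.rotate]
      rw [hrot]
      intro p hp
      simp only [List.zip_cons_cons, List.zip_nil_right, List.mem_cons,
        List.not_mem_nil, or_false, List.mem_singleton] at hp
      rcases hp with rfl | rfl | rfl | rfl | rfl
      · exact hT3
      · exact hyu.symm
      · exact hxy.symm
      · exact hvx.symm
      · exact hT2
  exact h5 [w, u, y, x, v] hcyc5 (by simp)
end

section
/- In the minimal counterexample (G, C_0), every 3-vertex of G lying inside C_0 either has a neighbor on C_0 or has a neighbor of degree at least 5. -/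
/-!
Common definitions for formalizing "A relaxation of the Bordeaux Conjecture"
(Liu, Li, Yu).  We model a plane graph combinatorially: a simple graph together
with a set of faces (each given by its boundary cycle, a list of vertices in
cyclic order), a distinguished outer face, and, for each cycle, the sets of
vertices drawn strictly inside and strictly outside of it.

A (2,0,0)-coloring uses colors `0, 1, 2 : Fin 3`, where color `0` is the color
of deficiency 2 (called "color 1" in the paper) and colors `1` and `2` must
induce independent sets.
-/

variable {V : Type} [Fintype V] [DecidableEq V]

set_option linter.unusedSectionVars false
section AuxLLY

variable {W : Type} [Fintype W] [DecidableEq W]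

private lemma fin3cases (a : Fin 3) : a = 0 ∨ a = 1 ∨ a = 2 := by omega

/-- transport of a graph along an equivalence -/
private def mapG (e : V ≃ W) (G : SimpleGraph V) : SimpleGraph W where
  Adj x y := G.Adj (e.symm x) (e.symm y)
  symm := ⟨fun _ _ h => SimpleGraph.Adj.symm h⟩
  loopless := ⟨fun _ h => G.loopless.irrefl _ h⟩

private lemma mapG_adj (e : V ≃ W) (G : SimpleGraph V) {x y : W} :
    (mapG e G).Adj x y ↔ G.Adj (e.symm x) (e.symm y) := Iff.rfl

private lemma mem_zip_map (e : V ≃ W) (l : List V) (x y : W) :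
    (x, y) ∈ (l.map e).zip ((l.map e).rotate 1) ↔
      (e.symm x, e.symm y) ∈ l.zip (l.rotate 1) := by
  rw [← List.map_rotate, List.zip_map, List.mem_map]
  constructor
  · rintro ⟨⟨a, b⟩, h, heq⟩
    obtain ⟨rfl, rfl⟩ : e a = x ∧ e b = y := by simpa [Prod.ext_iff] using heq
    simpa using h
  · intro hm
    exact ⟨(e.symm x, e.symm y), hm, by simp [Prod.map]⟩

private lemma isCycleList_map (e : V ≃ W) (G : SimpleGraph V) (l : List V) :
    IsCycleList (mapG e G) (l.map e) ↔ IsCycleList G l := by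
  unfold IsCycleList
  rw [List.length_map, List.nodup_map_iff e.injective]
  refine and_congr_right fun _ => and_congr_right fun _ => ?_
  constructor
  · intro hp p hmem
    obtain ⟨x, y⟩ := p
    have := hp (e x, e y) (by rw [mem_zip_map]; simpa using hmem)
    simpa [mapG_adj] using this
  · intro hp p hmem
    obtain ⟨x, y⟩ := p
    rw [mem_zip_map] at hmem
    exact hp _ hmem

private lemma list_map_symm_map (e : V ≃ W) (l : List W) :
    (l.map e.symm).map e = l := by
  rw [List.map_map]
  simp

private lemma isCycleList_map' (e : V ≃ W) (G : SimpleGraph V) (l : List W) :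
    IsCycleList (mapG e G) l ↔ IsCycleList G (l.map e.symm) := by
  conv_lhs => rw [← list_map_symm_map e l]
  exact isCycleList_map e G _

private lemma noFiveCycle_map (e : V ≃ W) {G : SimpleGraph V} (h : NoFiveCycle G) :
    NoFiveCycle (mapG e G) := by
  intro l hl
  have := h _ ((isCycleList_map' e G l).1 hl)
  simpa using this

private lemma noIntersectingTriangles_map (e : V ≃ W) {G : SimpleGraph V}
    (h : NoIntersectingTriangles G) : NoIntersectingTriangles (mapG e G) := by
  intro a b c d f g T1 T2 hne
  have key := h (e.symm a) (e.symm b) (e.symm c) (e.symm d) (e.symm f) (e.symm g) T1 T2 ?_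
  · have h2 := congrArg (Set.image e) key
    simpa [Set.image_insert_eq, Set.image_singleton] using h2
  · obtain ⟨x, hx1, hx2⟩ := hne
    refine ⟨e.symm x, ?_, ?_⟩
    · simp only [Set.mem_insert_iff, Set.mem_singleton_iff] at hx1 ⊢
      rcases hx1 with rfl | rfl | rfl <;> simp
    · simp only [Set.mem_insert_iff, Set.mem_singleton_iff] at hx2 ⊢
      rcases hx2 with rfl | rfl | rfl <;> simp

private lemma edgeSet_map (e : V ≃ W) (G : SimpleGraph V) :
    (mapG e G).edgeSet = Sym2.map e '' G.edgeSet := by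
  ext x
  induction x using Sym2.ind with
  | _ a b =>
    simp only [SimpleGraph.mem_edgeSet, Set.mem_image]
    constructor
    · intro hadj
      exact ⟨s(e.symm a, e.symm b), hadj, by simp⟩
    · rintro ⟨y, hy, hmap⟩
      induction y using Sym2.ind with
      | _ p q =>
        rw [Sym2.map_pair_eq, Sym2.eq_iff] at hmap
        rcases hmap with ⟨rfl, rfl⟩ | ⟨rfl, rfl⟩
        · rw [mapG_adj]; simpa using hy
        · rw [mapG_adj]
          rw [SimpleGraph.mem_edgeSet] at hy
          simpa using hy.symm

private lemma superextendable_of_map (e : V ≃ W) (G : SimpleGraph V) (l : List V)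
    (h : Superextendable (mapG e G) (l.map e)) : Superextendable G l := by
  intro c₀ hc₀
  have hcyc : IsCol200Cycle (l.map e) (fun x => c₀ (e.symm x)) := by
    constructor
    · intro x y hxy hx0
      have hxy' : CycAdj l (e.symm x) (e.symm y) := by
        unfold CycAdj at hxy ⊢
        rwa [mem_zip_map, mem_zip_map] at hxy
      exact hc₀.1 _ _ hxy' hx0
    · intro x hxl hx0
      have hmem : e.symm x ∈ l := by
        rcases List.mem_map.1 hxl with ⟨a, ha, rfl⟩; simpa using ha
      have himg : {u | CycAdj (l.map e) u x ∧ c₀ (e.symm u) = 0}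
          = e '' {u | CycAdj l u (e.symm x) ∧ c₀ u = 0} := by
        ext u
        simp only [Set.mem_image, Set.mem_setOf_eq]
        constructor
        · rintro ⟨h1, h2⟩
          refine ⟨e.symm u, ⟨?_, h2⟩, by simp⟩
          unfold CycAdj at h1 ⊢; rwa [mem_zip_map, mem_zip_map] at h1
        · rintro ⟨a, ⟨h1, h2⟩, rfl⟩
          refine ⟨?_, by simpa using h2⟩
          unfold CycAdj at h1 ⊢
          rw [mem_zip_map, mem_zip_map]
          simpa using h1
      rw [himg, Set.ncard_image_of_injective _ e.injective]
      exact hc₀.2 _ hmem hx0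
  obtain ⟨c', ⟨hc1, hc2⟩, hag, hoff⟩ := h _ hcyc
  refine ⟨fun x => c' (e x), ⟨?_, ?_⟩, ?_, ?_⟩
  · intro x y hxy hx0
    exact hc1 (e x) (e y) (by rw [mapG_adj]; simpa using hxy) hx0
  · intro x hx0
    have himg : {u | G.Adj x u ∧ c' (e u) = 0}
        = e.symm '' {u | (mapG e G).Adj (e x) u ∧ c' u = 0} := by
      ext u
      simp only [Set.mem_image, Set.mem_setOf_eq, mapG_adj]
      constructor
      · rintro ⟨h1, h2⟩
        exact ⟨e u, ⟨by simpa using h1, h2⟩, by simp⟩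
      · rintro ⟨a, ⟨h1, h2⟩, rfl⟩
        exact ⟨by simpa using h1, by simpa using h2⟩
    rw [himg, Set.ncard_image_of_injective _ e.symm.injective]
    exact hc2 (e x) hx0
  · intro x hxl
    have := hag (e x) (List.mem_map_of_mem hxl)
    simpa using this
  · intro x hxl u hul hadj
    have hx' : e x ∉ l.map e := by
      intro hmm
      rcases List.mem_map.1 hmm with ⟨a, ha, heq⟩
      exact hxl (by rwa [e.injective heq] at ha)
    exact hoff (e x) hx' (e u) (List.mem_map_of_mem hul)
      (by rw [mapG_adj]; simpa using hadj)

end AuxLLY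
section AuxLLY2
set_option linter.unusedSectionVars false

variable {W : Type} [Fintype W] [DecidableEq W]

/-- Any graph with a distinguished cycle can be viewed as a `PlaneGraph`. -/
private def trivialPlane (G : SimpleGraph W) (C : List W) (hC : IsCycleList G C) :
    PlaneGraph W where
  G := G
  faces := {C}
  outer := C
  outer_mem := rfl
  faces_cycle := by
    rintro l hl
    rw [Set.mem_singleton_iff] at hl
    subst hl; exact hC
  inside := fun l => {x | x ∉ l}
  outside := fun _ => ∅
  inside_outside_cover := by
    intro l _ x
    by_cases hx : x ∈ l
    · exact Or.inr (Or.inr hx)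
    · exact Or.inl hx
  inside_outside_disjoint := fun _ => by simp
  on_cycle_not_inside_outside := by
    intro l x hx
    exact ⟨fun h => h hx, fun h => (Set.notMem_empty x) h⟩
  no_edge_inside_outside := by
    intro l _ u _ w hw
    exact absurd hw (Set.notMem_empty w)
  inner_face_inside_empty := by
    rintro l hl hns
    rw [Set.mem_singleton_iff] at hl
    subst hl
    exact absurd ⟨0, Or.inl (List.rotate_zero _)⟩ hns
  outer_outside_empty := rfl

private lemma isCycleList_mono {G G' : SimpleGraph V} (h : ∀ a b, G.Adj a b → G'.Adj a b)
    {l : List V} (hl : IsCycleList G l) : IsCycleList G' l :=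
  ⟨hl.1, hl.2.1, fun p hp => h _ _ (hl.2.2 p hp)⟩

private lemma noFiveCycle_mono {G G' : SimpleGraph V} (hm : ∀ a b, G.Adj a b → G'.Adj a b)
    (h : NoFiveCycle G') : NoFiveCycle G := fun l hl => h l (isCycleList_mono hm hl)

private lemma noIntTri_mono {G G' : SimpleGraph V} (hm : ∀ a b, G.Adj a b → G'.Adj a b)
    (h : NoIntersectingTriangles G') : NoIntersectingTriangles G := by
  intro a b c d f g T1 T2 hne
  exact h a b c d f g ⟨hm _ _ T1.1, hm _ _ T1.2.1, hm _ _ T1.2.2⟩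
    ⟨hm _ _ T2.1, hm _ _ T2.2.1, hm _ _ T2.2.2⟩ hne

/-- Case A of the surgery: some color `α ≠ 0` is missing on all neighbors of `v`. -/
private lemma ext_caseA (G : SimpleGraph V) (C₀ : List V) (v : V) (c₀ c : V → Fin 3)
    (α : Fin 3)
    (hvC : v ∉ C₀) (hnb : ∀ w ∈ C₀, ¬ G.Adj v w)
    (hc : IsCol200 (delVerts G {v}) c)
    (hag : ∀ w ∈ C₀, c w = c₀ w)
    (hoff : ∀ x, x ∉ C₀ → ∀ w ∈ C₀, (delVerts G {v}).Adj x w → c x ≠ c w)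
    (hα0 : α ≠ 0) (hαN : ∀ w, G.Adj v w → c w ≠ α) :
    ∃ c' : V → Fin 3, IsCol200 G c' ∧ SuperextendsOn G C₀ c₀ c' := by
  classical
  set c' : V → Fin 3 := Function.update c v α with hc'def
  have hcv : c' v = α := Function.update_self _ _ _
  have hcx : ∀ x, x ≠ v → c' x = c x := fun x hx => Function.update_of_ne hx _ _
  refine ⟨c', ⟨?_, ?_⟩, ?_, ?_⟩
  · intro x y hxy hx0
    by_cases hxv : x = v
    · rw [hxv] at hxy ⊢
      have hyv : y ≠ v := hxy.ne'
      rw [hcv, hcx y hyv]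
      exact fun h => hαN y hxy h.symm
    · rw [hcx x hxv] at hx0 ⊢
      by_cases hyv : y = v
      · subst hyv
        rw [hcv]
        exact hαN x hxy.symm
      · rw [hcx y hyv]
        exact hc.1 x y ⟨hxy, hxv, hyv⟩ hx0
  · intro x hx0
    by_cases hxv : x = v
    · subst hxv; rw [hcv] at hx0; exact absurd hx0 hα0
    · rw [hcx x hxv] at hx0
      have hsub : {u | G.Adj x u ∧ c' u = 0} ⊆
          {u | (delVerts G {v}).Adj x u ∧ c u = 0} := by
        rintro y ⟨hadj, hy0⟩
        have hyv : y ≠ v := by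
          rintro rfl; rw [hcv] at hy0; exact hα0 hy0
        exact ⟨⟨hadj, hxv, hyv⟩, by rwa [hcx y hyv] at hy0⟩
      exact le_trans (Set.ncard_le_ncard hsub (Set.toFinite _)) (hc.2 x hx0)
  · intro x hx
    rw [hcx x (fun h => hvC (h ▸ hx))]
    exact hag x hx
  · intro x hxC w hwC hadj
    have hwv : w ≠ v := fun h => hvC (h ▸ hwC)
    rw [hcx w hwv]
    by_cases hxv : x = v
    · subst hxv; exact absurd hadj (hnb w hwC)
    · rw [hcx x hxv]
      exact hoff x hxC w hwC ⟨hadj, hxv, hwv⟩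

/-- Case B of the surgery: `v` can receive color `0`. -/
private lemma ext_caseB (G : SimpleGraph V) (C₀ : List V) (v : V) (c₀ c : V → Fin 3)
    (hvC : v ∉ C₀) (hnb : ∀ w ∈ C₀, ¬ G.Adj v w)
    (hc : IsCol200 (delVerts G {v}) c)
    (hag : ∀ w ∈ C₀, c w = c₀ w)
    (hoff : ∀ x, x ∉ C₀ → ∀ w ∈ C₀, (delVerts G {v}).Adj x w → c x ≠ c w)
    (hZcard : {w | G.Adj v w ∧ c w = 0}.ncard ≤ 2)
    (hZ1 : ∀ w, G.Adj v w → c w = 0 →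
      {x | (delVerts G {v}).Adj w x ∧ c x = 0}.ncard ≤ 1) :
    ∃ c' : V → Fin 3, IsCol200 G c' ∧ SuperextendsOn G C₀ c₀ c' := by
  classical
  set c' : V → Fin 3 := Function.update c v (0 : Fin 3) with hc'def
  have hcv : c' v = 0 := Function.update_self _ _ _
  have hcx : ∀ x, x ≠ v → c' x = c x := fun x hx => Function.update_of_ne hx _ _
  refine ⟨c', ⟨?_, ?_⟩, ?_, ?_⟩
  · intro x y hxy hx0
    by_cases hxv : x = v
    · subst hxv; exact absurd hcv hx0
    · rw [hcx x hxv] at hx0 ⊢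
      by_cases hyv : y = v
      · subst hyv; rw [hcv]; exact hx0
      · rw [hcx y hyv]; exact hc.1 x y ⟨hxy, hxv, hyv⟩ hx0
  · intro x hx0
    by_cases hxv : x = v
    · rw [hxv]
      have heq : {y | G.Adj v y ∧ c' y = 0} = {y | G.Adj v y ∧ c y = 0} := by
        ext y
        simp only [Set.mem_setOf_eq]
        refine and_congr_right fun hy => ?_
        rw [hcx y hy.ne']
      rw [heq]; exact hZcard
    · rw [hcx x hxv] at hx0
      by_cases hxadj : G.Adj v x
      · have h1 := hZ1 x hxadj hx0
        have hsub : {y | G.Adj x y ∧ c' y = 0} ⊆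
            insert v {y | (delVerts G {v}).Adj x y ∧ c y = 0} := by
          rintro y ⟨hxy, hy0⟩
          by_cases hyv : y = v
          · exact Set.mem_insert_iff.mpr (Or.inl hyv)
          · exact Set.mem_insert_iff.mpr
              (Or.inr ⟨⟨hxy, hxv, hyv⟩, by rwa [hcx y hyv] at hy0⟩)
        refine le_trans (Set.ncard_le_ncard hsub (Set.toFinite _)) ?_
        refine le_trans (Set.ncard_insert_le _ _) ?_
        omega
      · have hsub : {y | G.Adj x y ∧ c' y = 0} ⊆
            {y | (delVerts G {v}).Adj x y ∧ c y = 0} := by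
          rintro y ⟨hxy, hy0⟩
          have hyv : y ≠ v := fun h => hxadj (by rw [h] at hxy; exact hxy.symm)
          exact ⟨⟨hxy, hxv, hyv⟩, by rwa [hcx y hyv] at hy0⟩
        exact le_trans (Set.ncard_le_ncard hsub (Set.toFinite _)) (hc.2 x hx0)
  · intro x hx
    rw [hcx x (fun h => hvC (h ▸ hx))]
    exact hag x hx
  · intro x hxC w hwC hadj
    have hwv : w ≠ v := fun h => hvC (h ▸ hwC)
    rw [hcx w hwv]
    by_cases hxv : x = v
    · subst hxv; exact absurd hadj (hnb w hwC)
    · rw [hcx x hxv]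
      exact hoff x hxC w hwC ⟨hadj, hxv, hwv⟩

/-- Case C of the surgery: recolor the unique `0`-colored neighbor `u` of `v`,
then give `v` color `0`. -/
private lemma ext_caseC (G : SimpleGraph V) (C₀ : List V) (v : V) (c₀ c : V → Fin 3)
    (u a b : V)
    (hvC : v ∉ C₀) (hnb : ∀ w ∈ C₀, ¬ G.Adj v w)
    (hc : IsCol200 (delVerts G {v}) c)
    (hag : ∀ w ∈ C₀, c w = c₀ w)
    (hoff : ∀ x, x ∉ C₀ → ∀ w ∈ C₀, (delVerts G {v}).Adj x w → c x ≠ c w)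
    (hN : {x | G.Adj v x} = {u, a, b})
    (hua : u ≠ a) (hub : u ≠ b)
    (hcu : c u = 0) (hca : c a ≠ 0) (hcb : c b ≠ 0)
    (hdeg4u : {x | G.Adj u x}.ncard ≤ 4)
    (hZ2 : 2 ≤ {x | (delVerts G {v}).Adj u x ∧ c x = 0}.ncard) :
    ∃ c' : V → Fin 3, IsCol200 G c' ∧ SuperextendsOn G C₀ c₀ c' := by
  classical
  have hvu : G.Adj v u := by
    have : u ∈ ({u, a, b} : Set V) := Set.mem_insert _ _
    rw [← hN] at this; exact this
  have hva : G.Adj v a := by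
    have : a ∈ ({u, a, b} : Set V) := by simp
    rw [← hN] at this; exact this
  have hvb : G.Adj v b := by
    have : b ∈ ({u, a, b} : Set V) := by simp
    rw [← hN] at this; exact this
  have hNiff : ∀ x, G.Adj v x → x = u ∨ x = a ∨ x = b := by
    intro x hx
    have hx' : x ∈ {y | G.Adj v y} := hx
    rw [hN] at hx'
    simpa using hx'
  have hune : u ≠ v := fun h => G.loopless.irrefl v (h ▸ hvu)
  have hane : a ≠ v := fun h => G.loopless.irrefl v (h ▸ hva)
  have hbne : b ≠ v := fun h => G.loopless.irrefl v (h ▸ hvb)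
  have huC : u ∉ C₀ := fun h => hnb u h hvu
  -- bound on the nonzero off-cycle neighborhood of u
  have hunion : {x | G.Adj u x} =
      insert v ({x | (delVerts G {v}).Adj u x ∧ c x = 0} ∪
        {x | (delVerts G {v}).Adj u x ∧ c x ≠ 0}) := by
    ext x
    simp only [Set.mem_setOf_eq, Set.mem_insert_iff, Set.mem_union]
    constructor
    · intro hx
      by_cases hxv : x = v
      · exact Or.inl hxv
      · refine Or.inr ?_
        by_cases hx0 : c x = 0
        · exact Or.inl ⟨⟨hx, hune, hxv⟩, hx0⟩
        · exact Or.inr ⟨⟨hx, hune, hxv⟩, hx0⟩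
    · rintro (rfl | ⟨⟨h, -, -⟩, -⟩ | ⟨⟨h, -, -⟩, -⟩)
      · exact hvu.symm
      · exact h
      · exact h
  have hvnot : v ∉ ({x | (delVerts G {v}).Adj u x ∧ c x = 0} ∪
      {x | (delVerts G {v}).Adj u x ∧ c x ≠ 0}) := by
    rintro (⟨⟨-, -, hvv⟩, -⟩ | ⟨⟨-, -, hvv⟩, -⟩) <;> exact hvv rfl
  have hdisj : Disjoint {x | (delVerts G {v}).Adj u x ∧ c x = 0}
      {x | (delVerts G {v}).Adj u x ∧ c x ≠ 0} := by
    rw [Set.disjoint_left]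
    rintro x ⟨-, h0⟩ ⟨-, h1⟩
    exact h1 h0
  have hWcard : {x | (delVerts G {v}).Adj u x ∧ c x ≠ 0}.ncard ≤ 1 := by
    have hcount : {x | G.Adj u x}.ncard =
        ({x | (delVerts G {v}).Adj u x ∧ c x = 0}.ncard +
          {x | (delVerts G {v}).Adj u x ∧ c x ≠ 0}.ncard) + 1 := by
      rw [hunion, Set.ncard_insert_of_notMem hvnot (Set.toFinite _),
        Set.ncard_union_eq hdisj (Set.toFinite _) (Set.toFinite _)]
    omega
  obtain ⟨α, hα0, hαW⟩ : ∃ α : Fin 3, α ≠ 0 ∧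
      ∀ w, (delVerts G {v}).Adj u w → c w ≠ 0 → c w ≠ α := by
    by_cases hW : {x | (delVerts G {v}).Adj u x ∧ c x ≠ 0}.Nonempty
    · obtain ⟨w0, hw0⟩ := hW
      refine ⟨if c w0 = 1 then 2 else 1, ?_, ?_⟩
      · split_ifs <;> decide
      · intro w hw1 hw2
        have hww : w = w0 :=
          (Set.ncard_le_one (Set.toFinite _)).1 hWcard w ⟨hw1, hw2⟩ w0 hw0
        subst hww
        split_ifs with h1
        · rw [h1]; decide
        · exact h1
    · refine ⟨1, by decide, fun w hw1 hw2 => ?_⟩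
      exact (hW ⟨w, hw1, hw2⟩).elim
  set c' : V → Fin 3 := Function.update (Function.update c u α) v 0 with hc'def
  have hc'v : c' v = 0 := Function.update_self _ _ _
  have hc'u : c' u = α := by
    rw [hc'def]
    rw [Function.update_of_ne hune, Function.update_self]
  have hc'x : ∀ x, x ≠ v → x ≠ u → c' x = c x := fun x hxv hxu => by
    rw [hc'def, Function.update_of_ne hxv, Function.update_of_ne hxu]
  refine ⟨c', ⟨?_, ?_⟩, ?_, ?_⟩
  · intro x y hxy hx0
    by_cases hxv : x = v
    · subst hxv; exact absurd hc'v hx0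
    by_cases hxu : x = u
    · rw [hxu] at hxy hx0 ⊢
      rw [hc'u] at hx0 ⊢
      have hyne : y ≠ u := hxy.ne'
      by_cases hyv : y = v
      · subst hyv; rw [hc'v]; exact hx0
      · rw [hc'x y hyv hyne]
        by_cases hy0 : c y = 0
        · rw [hy0]; exact hx0
        · exact fun hh => hαW y ⟨hxy, hune, hyv⟩ hy0 hh.symm
    · rw [hc'x x hxv hxu] at hx0 ⊢
      by_cases hyv : y = v
      · subst hyv; rw [hc'v]; exact hx0
      by_cases hyu : y = u
      · subst hyu
        rw [hc'u]
        exact hαW x ⟨hxy.symm, hune, hxv⟩ hx0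
      · rw [hc'x y hyv hyu]
        exact hc.1 x y ⟨hxy, hxv, hyv⟩ hx0
  · intro x hx0
    by_cases hxv : x = v
    · rw [hxv]
      have hempty : {y | G.Adj v y ∧ c' y = 0} = ∅ := by
        ext y
        simp only [Set.mem_setOf_eq, Set.mem_empty_iff_false, iff_false, not_and]
        intro hy
        rcases hNiff y hy with rfl | rfl | rfl
        · rw [hc'u]; exact hα0
        · rw [hc'x _ hane hua.symm]; exact hca
        · rw [hc'x _ hbne hub.symm]; exact hcb
      rw [hempty]
      simp
    by_cases hxu : x = u
    · subst hxu; rw [hc'u] at hx0; exact absurd hx0 hα0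
    · rw [hc'x x hxv hxu] at hx0
      have hsub : {y | G.Adj x y ∧ c' y = 0} ⊆
          {y | (delVerts G {v}).Adj x y ∧ c y = 0} := by
        rintro y ⟨hxy, hy0⟩
        have hyu : y ≠ u := by
          rintro rfl; rw [hc'u] at hy0; exact hα0 hy0
        have hyv : y ≠ v := by
          rintro rfl
          rcases hNiff x hxy.symm with rfl | rfl | rfl
          · exact hxu rfl
          · exact hca hx0
          · exact hcb hx0
        rw [hc'x y hyv hyu] at hy0
        exact ⟨⟨hxy, hxv, hyv⟩, hy0⟩
      exact le_trans (Set.ncard_le_ncard hsub (Set.toFinite _)) (hc.2 x hx0)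
  · intro x hx
    have hxv : x ≠ v := fun h => hvC (h ▸ hx)
    have hxu : x ≠ u := fun h => huC (h ▸ hx)
    rw [hc'x x hxv hxu]
    exact hag x hx
  · intro x hxC w hwC hxw
    have hwv : w ≠ v := fun h => hvC (h ▸ hwC)
    have hwu : w ≠ u := fun h => huC (h ▸ hwC)
    rw [hc'x w hwv hwu]
    by_cases hxv : x = v
    · subst hxv; exact absurd hxw (hnb w hwC)
    by_cases hxu : x = u
    · subst hxu
      rw [hc'u]
      by_cases hw0 : c w = 0
      · rw [hw0]; exact hα0
      · exact fun hh => hαW w ⟨hxw, hune, hwv⟩ hw0 hh.symm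
    · rw [hc'x x hxv hxu]
      exact hoff x hxC w hwC ⟨hxw, hxv, hwv⟩

end AuxLLY2
section AuxLLY3
set_option linter.unusedSectionVars false

private lemma surgery (G : SimpleGraph V) (C₀ : List V) (v : V)
    (hvC : v ∉ C₀) (hnb : ∀ w ∈ C₀, ¬ G.Adj v w)
    (hdegv : {w | G.Adj v w}.ncard = 3)
    (hdeg4 : ∀ w, G.Adj v w → {x | G.Adj w x}.ncard ≤ 4)
    (hsup : Superextendable (delVerts G {v}) C₀) :
    Superextendable G C₀ := by
  classical
  intro c₀ hc₀
  obtain ⟨c, hc, hag, hoff⟩ := hsup c₀ hc₀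
  obtain ⟨n1, n2, n3, h12, h13, h23, hN⟩ := Set.ncard_eq_three.1 hdegv
  have hNiff : ∀ x, G.Adj v x ↔ x = n1 ∨ x = n2 ∨ x = n3 := by
    intro x
    constructor
    · intro hx
      have hx' : x ∈ {w | G.Adj v w} := hx
      rw [hN] at hx'
      simpa using hx'
    · intro hx
      have hx' : x ∈ ({n1, n2, n3} : Set V) := by simpa using hx
      rw [← hN] at hx'
      exact hx'
  have doA : ∀ α : Fin 3, α ≠ 0 → c n1 ≠ α → c n2 ≠ α → c n3 ≠ α →
      ∃ c' : V → Fin 3, IsCol200 G c' ∧ SuperextendsOn G C₀ c₀ c' := by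
    intro α hα0 e1 e2 e3
    refine ext_caseA G C₀ v c₀ c α hvC hnb hc hag hoff hα0 ?_
    intro w hw
    rcases (hNiff w).1 hw with rfl | rfl | rfl <;> assumption
  have doB0 : c n1 ≠ 0 → c n2 ≠ 0 → c n3 ≠ 0 →
      ∃ c' : V → Fin 3, IsCol200 G c' ∧ SuperextendsOn G C₀ c₀ c' := by
    intro e1 e2 e3
    refine ext_caseB G C₀ v c₀ c hvC hnb hc hag hoff ?_ ?_
    · have hempty : {w | G.Adj v w ∧ c w = 0} = ∅ := by
        ext w
        simp only [Set.mem_setOf_eq, Set.mem_empty_iff_false, iff_false, not_and]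
        intro hw
        rcases (hNiff w).1 hw with rfl | rfl | rfl <;> assumption
      rw [hempty]; simp
    · intro w hw hw0
      rcases (hNiff w).1 hw with rfl | rfl | rfl <;>
        [exact absurd hw0 e1; exact absurd hw0 e2; exact absurd hw0 e3]
  have doC : ∀ u a b : V, ({w | G.Adj v w} = {u, a, b}) → u ≠ a → u ≠ b →
      c u = 0 → c a ≠ 0 → c b ≠ 0 →
      ∃ c' : V → Fin 3, IsCol200 G c' ∧ SuperextendsOn G C₀ c₀ c' := by
    intro u a b hN' hua hub hcu hca hcb
    have hvu : G.Adj v u := by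
      have hu' : u ∈ {w | G.Adj v w} := by
        rw [hN']; exact Set.mem_insert _ _
      exact hu'
    by_cases hz : {x | (delVerts G {v}).Adj u x ∧ c x = 0}.ncard ≤ 1
    · refine ext_caseB G C₀ v c₀ c hvC hnb hc hag hoff ?_ ?_
      · have hsub : {w | G.Adj v w ∧ c w = 0} ⊆ {u} := by
          rintro w ⟨hw, hw0⟩
          have hw' : w ∈ ({u, a, b} : Set V) := by rw [← hN']; exact hw
          simp only [Set.mem_insert_iff, Set.mem_singleton_iff] at hw'
          rcases hw' with rfl | rfl | rfl
          · exact Set.mem_singleton _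
          · exact absurd hw0 hca
          · exact absurd hw0 hcb
        refine le_trans (Set.ncard_le_ncard hsub (Set.toFinite _)) ?_
        rw [Set.ncard_singleton]
        omega
      · intro w hw hw0
        have hw' : w ∈ ({u, a, b} : Set V) := by rw [← hN']; exact hw
        simp only [Set.mem_insert_iff, Set.mem_singleton_iff] at hw'
        rcases hw' with rfl | rfl | rfl
        · exact hz
        · exact absurd hw0 hca
        · exact absurd hw0 hcb
    · exact ext_caseC G C₀ v c₀ c u a b hvC hnb hc hag hoff hN' hua hub hcu hca hcb
        (hdeg4 u hvu) (by omega)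
  rcases fin3cases (c n1) with e1 | e1 | e1 <;>
    rcases fin3cases (c n2) with e2 | e2 | e2 <;>
    rcases fin3cases (c n3) with e3 | e3 | e3 <;>
    first
    | exact doA 1 (by decide) (by rw [e1]; decide) (by rw [e2]; decide) (by rw [e3]; decide)
    | exact doA 2 (by decide) (by rw [e1]; decide) (by rw [e2]; decide) (by rw [e3]; decide)
    | exact doB0 (by rw [e1]; decide) (by rw [e2]; decide) (by rw [e3]; decide)
    | exact doC n1 n2 n3 hN h12 h13 e1 (by rw [e2]; decide) (by rw [e3]; decide)
    | exact doC n2 n1 n3 (by rw [hN]; ext x; simp; tauto) h12.symm h23 e2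
        (by rw [e1]; decide) (by rw [e3]; decide)
    | exact doC n3 n1 n2 (by rw [hN]; ext x; simp; tauto) h13.symm h23.symm e3
        (by rw [e1]; decide) (by rw [e2]; decide)

end AuxLLY3
/-- In the minimal counterexample `(G, C₀)` (with `C₀` bounding the
outer face), every 3-vertex of `G` lying inside `C₀` has a neighbor on `C₀` or a
neighbor of degree at least 5. -/
theorem mincex_three_vertex_inside_C0
    (P : PlaneGraph V) (C₀ : List V) (h : IsMinCex P C₀)
    (houter : SameCycle C₀ P.outer)
    (v : V) (hv : v ∈ P.inside C₀) (hdeg : P.deg v = 3) :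
    (∃ u ∈ C₀, P.G.Adj v u) ∨ (∃ u : V, P.G.Adj v u ∧ 5 ≤ P.deg u) := by
  classical
  by_contra hcontra
  push_neg at hcontra
  obtain ⟨hnb, hdeg4⟩ := hcontra
  obtain ⟨⟨hno5, hnoTri⟩, hcyc, hlen, hnsup, hmin⟩ := h
  have hvC : v ∉ C₀ := fun hmem => (P.on_cycle_not_inside_outside C₀ v hmem).1 hv
  have hHadjG : ∀ a b, (delVerts P.G {v}).Adj a b → P.G.Adj a b := fun a b h => h.1
  have hC₀H : IsCycleList (delVerts P.G {v}) C₀ := by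
    refine ⟨hcyc.1, hcyc.2.1, ?_⟩
    intro p hp
    obtain ⟨x, y⟩ := p
    have hx : x ∈ C₀ := (List.of_mem_zip hp).1
    have hy : y ∈ C₀ := List.mem_rotate.1 (List.of_mem_zip hp).2
    exact ⟨hcyc.2.2 _ hp, fun h => hvC (h ▸ hx), fun h => hvC (h ▸ hy)⟩
  have hdegv : {u | P.G.Adj v u}.ncard = 3 := hdeg
  obtain ⟨u0, hu0⟩ : {u | P.G.Adj v u}.Nonempty :=
    Set.nonempty_of_ncard_ne_zero (by rw [hdegv]; omega)
  have hedgesub : (delVerts P.G {v}).edgeSet ⊂ P.G.edgeSet := by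
    constructor
    · intro x hx
      induction x using Sym2.ind with
      | _ a b =>
        rw [SimpleGraph.mem_edgeSet] at hx ⊢
        exact hHadjG a b hx
    · intro hsub
      have h1 : s(v, u0) ∈ P.G.edgeSet := (SimpleGraph.mem_edgeSet P.G).2 hu0
      have h3 : (delVerts P.G {v}).Adj v u0 :=
        (SimpleGraph.mem_edgeSet (delVerts P.G {v})).1 (hsub h1)
      exact h3.2.1 rfl
  set e : V ≃ Fin (Fintype.card V) := Fintype.equivFin V with he
  have hC'cyc : IsCycleList (mapG e (delVerts P.G {v})) (C₀.map e) :=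
    (isCycleList_map e (delVerts P.G {v}) C₀).2 hC₀H
  set P' : PlaneGraph (Fin (Fintype.card V)) :=
    trivialPlane (mapG e (delVerts P.G {v})) (C₀.map e) hC'cyc with hP'
  have hfam : P'.InFamilyG :=
    ⟨noFiveCycle_map e (noFiveCycle_mono hHadjG hno5),
     noIntersectingTriangles_map e (noIntTri_mono hHadjG hnoTri)⟩
  have hlen' : (C₀.map e).length = 3 ∨ (C₀.map e).length = 7 := by
    rw [List.length_map]; exact hlen
  have hsigma : P'.sigma < P.sigma := by
    unfold PlaneGraph.sigma
    have h1 : P'.G.edgeSet = Sym2.map e '' (delVerts P.G {v}).edgeSet :=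
      edgeSet_map e (delVerts P.G {v})
    rw [h1, Set.ncard_image_of_injective _ (Sym2.map.injective e.injective),
      Fintype.card_fin]
    exact Nat.add_lt_add_left (Set.ncard_lt_ncard hedgesub (Set.toFinite _)) _
  have hsupH' : Superextendable (mapG e (delVerts P.G {v})) (C₀.map e) :=
    hmin _ P' (C₀.map e) hfam hC'cyc hlen' hsigma
  have hsupH : Superextendable (delVerts P.G {v}) C₀ :=
    superextendable_of_map e (delVerts P.G {v}) C₀ hsupH'
  have hdeg4' : ∀ u, P.G.Adj v u → {x | P.G.Adj u x}.ncard ≤ 4 := by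
    intro u hu
    have h5 := hdeg4 u hu
    have : P.deg u = {x | P.G.Adj u x}.ncard := rfl
    omega
  exact hnsup (surgery P.G C₀ v hvC hnb hdegv hdeg4' hsupH)
end
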